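/- Every ℂ-algebra homomorphism from the Weyl algebra Aₙ(ℂ) into a nontrivial ring is injective. (The paper's claim in Example 5.1.4 that, since Aₙ(ℂ) is simple, any morphism to Space(Aₙ(ℂ)) is dominant, i.e. the related ℂ-algebra homomorphism from Aₙ(ℂ) is injective.) -/

import Mathlib

open MvPolynomial

set_option synthInstance.maxHeartbeats 1000000
set_option maxHeartbeats 1000000

/-- The Weyl algebra `Aₙ(ℂ)`, realized as the `ℂ`-subalgebra of
`Module.End ℂ (MvPolynomial (Fin n) ℂ)` generated by the multiplication operators
`xᵢ` (multiplication by the variable `X i`) and the formal partial derivative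
operators `∂ᵢ = pderiv i`. -/
noncomputable def WeylAlgebra (n : ℕ) :
    Subalgebra ℂ (Module.End ℂ (MvPolynomial (Fin n) ℂ)) :=
  Algebra.adjoin ℂ
    ((Set.range fun i : Fin n =>
        (LinearMap.mulLeft ℂ (X i) : Module.End ℂ (MvPolynomial (Fin n) ℂ))) ∪
     (Set.range fun i : Fin n =>
        ((pderiv i).toLinearMap : Module.End ℂ (MvPolynomial (Fin n) ℂ))))

namespace WeylProof

variable {n : ℕ}

abbrev Pn (n : ℕ) := MvPolynomial (Fin n) ℂ
abbrev En (n : ℕ) := Module.End ℂ (Pn n)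

noncomputable def M (g : Pn n) : En n := LinearMap.mulLeft ℂ g

noncomputable def pd (i : Fin n) : En n := (pderiv i).toLinearMap

lemma M_mul (p q : Pn n) : M (p * q) = M p * M q := by
  ext r
  simp [M, LinearMap.mulLeft_apply, Module.End.mul_apply, mul_assoc]

lemma M_add (p q : Pn n) : M (p + q) = M p + M q := by
  ext r
  simp [M, LinearMap.mulLeft_apply, add_mul]

lemma M_comm (p q : Pn n) : M p * M q = M q * M p := by
  rw [← M_mul, ← M_mul, mul_comm]

lemma M_C (c : ℂ) : M (C c : Pn n) = algebraMap ℂ (En n) c := by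
  ext q
  simp [M, LinearMap.mulLeft_apply, Module.algebraMap_end_apply, smul_eq_C_mul]
  rw [single_eq_monomial, single_eq_monomial, coeff_monomial, coeff_monomial]; split_ifs <;> simp

lemma comm_pd_M (i : Fin n) (g : Pn n) : pd i * M g - M g * pd i = M (pderiv i g) := by
  apply LinearMap.ext
  intro q
  show pderiv i (g * q) - g * pderiv i q = pderiv i g * q
  rw [pderiv_mul]
  ring

def Ord : ℕ → En n → Prop
  | 0, D => ∀ i, D * M (X i) - M (X i) * D = 0
  | (k+1), D => ∀ i, Ord k (D * M (X i) - M (X i) * D)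

lemma ord0_iff (D : En n) : Ord 0 D ↔ ∀ i, D * M (X i) - M (X i) * D = 0 := Iff.rfl

lemma ordS_iff (k : ℕ) (D : En n) :
    Ord (k+1) D ↔ ∀ i, Ord k (D * M (X i) - M (X i) * D) := Iff.rfl

lemma ord_mono : ∀ k (D : En n), Ord k D → Ord (k+1) D := by
  intro k
  induction k with
  | zero =>
    intro D h
    rw [ordS_iff]
    intro i
    rw [ord0_iff] at h ⊢
    rw [h i]
    intro j
    simp
  | succ k ih =>
    intro D h i
    exact ih _ (h i)

lemma ord_le {k l : ℕ} (h : k ≤ l) {D : En n} (hD : Ord k D) : Ord l D := by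
  induction h with
  | refl => exact hD
  | step _ ih => exact ord_mono _ _ ih

lemma ord_zero (k : ℕ) : Ord k (0 : En n) := by
  have h0 : Ord 0 (0 : En n) := fun i => by simp
  exact ord_le (Nat.zero_le k) h0

lemma ord_add : ∀ k (D D' : En n), Ord k D → Ord k D' → Ord k (D + D') := by
  intro k
  induction k with
  | zero =>
    intro D D' h h'
    have e : ∀ i, (D + D') * M (X i) - M (X i) * (D + D') =
        (D * M (X i) - M (X i) * D) + (D' * M (X i) - M (X i) * D') := fun i => by
      simp only [mul_sub, sub_mul, add_mul, mul_add]
      abel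
    rw [ord0_iff] at h h' ⊢
    intro i
    rw [e i, h i, h' i, add_zero]
  | succ k ih =>
    intro D D' h h'
    have e : ∀ i, (D + D') * M (X i) - M (X i) * (D + D') =
        (D * M (X i) - M (X i) * D) + (D' * M (X i) - M (X i) * D') := fun i => by
      simp only [mul_sub, sub_mul, add_mul, mul_add]
      abel
    rw [ordS_iff] at h h' ⊢
    intro i
    rw [e i]
    exact ih _ _ (h i) (h' i)

lemma ord_M (g : Pn n) : Ord 0 (M g : En n) := fun i => by rw [M_comm, sub_self]

lemma ord_algebraMap (c : ℂ) : Ord 0 (algebraMap ℂ (En n) c) := fun i => by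
  rw [Algebra.commutes, sub_self]

lemma ord_mul : ∀ s k l (D D' : En n), k + l ≤ s → Ord k D → Ord l D' →
    Ord (k + l) (D * D') := by
  intro s
  induction s with
  | zero =>
    intro k l D D' hle h h'
    obtain ⟨hk, hl⟩ : k = 0 ∧ l = 0 := by omega
    subst hk; subst hl
    rw [ord0_iff] at h h' ⊢
    intro i
    have e : (D * D') * M (X i) - M (X i) * (D * D') =
        D * (D' * M (X i) - M (X i) * D') + (D * M (X i) - M (X i) * D) * D' := by
      simp only [mul_sub, sub_mul, mul_assoc]
      abel
    rw [e, h i, h' i, mul_zero, zero_mul, add_zero]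
  | succ s ih =>
    intro k l D D' hle h h'
    rcases Nat.lt_or_ge (k + l) (s + 1) with hlt | hge
    · exact ih k l D D' (Nat.lt_succ_iff.mp hlt) h h'
    have hkl : k + l = s + 1 := le_antisymm hle hge
    rw [hkl, ordS_iff]
    intro i
    have e : (D * D') * M (X i) - M (X i) * (D * D') =
        D * (D' * M (X i) - M (X i) * D') + (D * M (X i) - M (X i) * D) * D' := by
      simp only [mul_sub, sub_mul, mul_assoc]
      abel
    rw [e]
    apply ord_add
    · -- D * comm(D', X i) has Ord s
      rcases l with _ | m
      · rw [ord0_iff] at h'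
        rw [h' i, mul_zero]
        exact ord_zero s
      · have h1 : Ord m (D' * M (X i) - M (X i) * D') := h' i
        have h2 : Ord (k + m) (D * (D' * M (X i) - M (X i) * D')) :=
          ih k m _ _ (by omega) h h1
        exact ord_le (by omega) h2
    · rcases k with _ | j
      · rw [ord0_iff] at h
        rw [h i, zero_mul]
        exact ord_zero s
      · have h1 : Ord j (D * M (X i) - M (X i) * D) := h i
        have h2 : Ord (j + l) ((D * M (X i) - M (X i) * D) * D') :=
          ih j l _ _ (by omega) h1 h'
        exact ord_le (by omega) h2

lemma exists_ord (D : En n) (hD : D ∈ WeylAlgebra n) : ∃ k, Ord k D := by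
  induction hD using Algebra.adjoin_induction with
  | mem x hx =>
    rcases hx with ⟨i, rfl⟩ | ⟨i, rfl⟩
    · exact ⟨0, ord_M (X i)⟩
    · refine ⟨1, fun j => ?_⟩
      have : pd i * M (X j) - M (X j) * pd i = M (pderiv i (X j)) := comm_pd_M i (X j)
      show Ord 0 ((pderiv i).toLinearMap * M (X j) - M (X j) * (pderiv i).toLinearMap)
      rw [show ((pderiv i).toLinearMap : En n) = pd i from rfl, this]
      exact ord_M _
  | algebraMap r => exact ⟨0, ord_algebraMap r⟩
  | add x y hx hy ihx ihy =>
    obtain ⟨k, hk⟩ := ihx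
    obtain ⟨l, hl⟩ := ihy
    exact ⟨max k l, ord_add _ _ _ (ord_le (le_max_left k l) hk) (ord_le (le_max_right k l) hl)⟩
  | mul x y hx hy ihx ihy =>
    obtain ⟨k, hk⟩ := ihx
    obtain ⟨l, hl⟩ := ihy
    exact ⟨k + l, ord_mul (k + l) k l x y le_rfl hk hl⟩

lemma coeff_pderiv (i : Fin n) (g : Pn n) (m : Fin n →₀ ℕ) :
    coeff m (pderiv i g) = ((m i : ℂ) + 1) * coeff (m + Finsupp.single i 1) g := by
  induction g using MvPolynomial.induction_on' with
  | monomial s a =>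
    rw [pderiv_monomial, coeff_monomial, coeff_monomial]
    split_ifs with h1 h2 h2
    · subst h2
      have hsi : (m + Finsupp.single i 1 : Fin n →₀ ℕ) i = m i + 1 := by simp
      rw [hsi]
      push_cast
      ring
    · by_cases hsi : s i = 0
      · simp [hsi]
      · exfalso
        apply h2
        have h1j : ∀ j, s j - (Finsupp.single i 1) j = m j := fun j => by
          rw [← Finsupp.tsub_apply, h1]
        ext j
        have := h1j j
        rcases eq_or_ne j i with rfl | hj
        · simp only [Finsupp.single_eq_same] at this ⊢
          simp only [Finsupp.add_apply, Finsupp.single_eq_same]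
          omega
        · simp only [Finsupp.single_eq_of_ne hj] at this ⊢
          simp only [Finsupp.add_apply, Finsupp.single_eq_of_ne hj]
          omega
    · exfalso
      apply h1
      subst h2
      exact add_tsub_cancel_right m (Finsupp.single i 1)
    · ring
  | add p q ihp ihq =>
    simp only [map_add, coeff_add, ihp, ihq]
    ring

lemma eq_C_of_pderiv_eq_zero {g : Pn n} (h : ∀ i, pderiv i g = 0) :
    g = C (coeff 0 g) := by
  ext m
  rcases eq_or_ne m 0 with rfl | hm
  · simp
  · rw [coeff_C, if_neg (by exact fun h' => hm h'.symm)]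
    obtain ⟨i, hi⟩ : ∃ i, m i ≠ 0 := by
      by_contra hc
      push_neg at hc
      exact hm (Finsupp.ext fun j => hc j)
    have key := coeff_pderiv i g (m - Finsupp.single i 1)
    rw [h i, coeff_zero] at key
    have hle : Finsupp.single i 1 ≤ m := by
      rw [Finsupp.single_le_iff]
      omega
    rw [tsub_add_cancel_of_le hle] at key
    have hne : ((((m - Finsupp.single i 1 : Fin n →₀ ℕ)) i : ℂ) + 1) ≠ 0 := by
      intro h0
      have h0' : (((m - Finsupp.single i 1 : Fin n →₀ ℕ) i + 1 : ℕ) : ℂ) = 0 := by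
        push_cast
        exact h0
      rw [show ((0:ℂ)) = ((0:ℕ):ℂ) by norm_num] at h0'
      exact Nat.succ_ne_zero _ (Nat.cast_injective h0')
    exact (mul_eq_zero.mp key.symm).resolve_left hne

lemma totalDegree_pderiv_lt {g : Pn n} {i : Fin n} (h : pderiv i g ≠ 0) :
    (pderiv i g).totalDegree < g.totalDegree := by
  have key : ∀ m ∈ (pderiv i g).support,
      (m.sum fun _ e => e) + 1 ≤ g.totalDegree := by
    intro m hm
    rw [mem_support_iff, coeff_pderiv] at hm
    have hc : coeff (m + Finsupp.single i 1) g ≠ 0 := by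
      intro h0
      rw [h0, mul_zero] at hm
      exact hm rfl
    have hle := le_totalDegree (p := g) (mem_support_iff.mpr hc)
    have hsum : ((m + Finsupp.single i 1).sum fun _ e => e) =
        (m.sum fun _ e => e) + 1 := by
      rw [Finsupp.sum_add_index' (fun _ => rfl) (fun _ _ _ => rfl)]
      simp
    omega
  obtain ⟨m₀, hm₀⟩ := support_nonempty.mpr h
  have hpos : 0 < g.totalDegree := by
    have := key m₀ hm₀
    omega
  rw [totalDegree, Finset.sup_lt_iff (by simpa using hpos)]
  intro m hm
  have := key m hm
  omega

lemma mem_X (i : Fin n) : M (X i) ∈ WeylAlgebra n :=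
  Algebra.subset_adjoin (Or.inl ⟨i, rfl⟩)

lemma mem_pd (i : Fin n) : pd i ∈ WeylAlgebra n :=
  Algebra.subset_adjoin (Or.inr ⟨i, rfl⟩)

lemma hM (g : Pn n) : M g ∈ WeylAlgebra n := by
  induction g using MvPolynomial.induction_on with
  | C a =>
    rw [M_C]
    exact Subalgebra.algebraMap_mem _ a
  | add p q ihp ihq =>
    rw [M_add]
    exact add_mem ihp ihq
  | mul_X p i ihp =>
    rw [M_mul]
    exact mul_mem ihp (mem_X i)

section Hom

variable {S : Type*} [Ring S] [Nontrivial S] [Algebra ℂ S] (f : WeylAlgebra n →ₐ[ℂ] S)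

lemma poly_ker : ∀ d (g : Pn n), g.totalDegree ≤ d →
    f ⟨M g, hM g⟩ = 0 → g = 0 := by
  intro d
  induction d using Nat.strong_induction_on with
  | _ d ih =>
    intro g hdeg hf
    by_cases hg : ∀ i, pderiv i g = 0
    · obtain ⟨c, rfl⟩ : ∃ c, g = C c := ⟨_, eq_C_of_pderiv_eq_zero hg⟩
      have helt : (⟨M (C c), hM (C c)⟩ : WeylAlgebra n) =
          algebraMap ℂ (WeylAlgebra n) c := by
        apply Subtype.ext
        show M (C c) = _
        rw [M_C]
        simp
      rw [helt, AlgHom.commutes] at hf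
      have hc : c = 0 :=
        (algebraMap ℂ S).injective (by rw [hf, map_zero])
      rw [hc, map_zero]
    · push_neg at hg
      obtain ⟨i, hi⟩ := hg
      exfalso
      apply hi
      have hlt : (pderiv i g).totalDegree < d :=
        lt_of_lt_of_le (totalDegree_pderiv_lt hi) hdeg
      refine ih _ hlt _ le_rfl ?_
      have helt : (⟨M (pderiv i g), hM _⟩ : WeylAlgebra n) =
          ⟨pd i, mem_pd i⟩ * ⟨M g, hM g⟩ - ⟨M g, hM g⟩ * ⟨pd i, mem_pd i⟩ := by
        apply Subtype.ext
        show M (pderiv i g) = pd i * M g - M g * pd i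
        rw [comm_pd_M]
      rw [helt]
      rw [map_sub f, map_mul f, map_mul f, hf, mul_zero, zero_mul, sub_zero]

lemma ord_ker : ∀ k (a : WeylAlgebra n), Ord k (a : En n) → f a = 0 → a = 0 := by
  intro k
  induction k with
  | zero =>
    intro a h hf
    rw [ord0_iff] at h
    have hcomm : ∀ g : Pn n, (a : En n) * M g = M g * (a : En n) := by
      intro g
      induction g using MvPolynomial.induction_on with
      | C c =>
        rw [M_C]
        exact (Algebra.commutes c _).symm
      | add p q ihp ihq =>
        rw [M_add, mul_add, add_mul, ihp, ihq]
      | mul_X p i ihp =>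
        have hXi : (a : En n) * M (X i) = M (X i) * (a : En n) := by
          have := h i
          linear_combination (norm := noncomm_ring) this
        rw [M_mul, ← mul_assoc, ihp, mul_assoc, hXi, mul_assoc]
    have haM : (a : En n) = M ((a : En n) 1) := by
      apply LinearMap.ext
      intro q
      have h1 : (a : En n) q = ((a : En n) * M q) 1 := by
        show _ = (a : En n) (M q 1)
        simp [M, LinearMap.mulLeft_apply]
      rw [h1, hcomm q]
      show M q ((a : En n) 1) = M ((a : En n) 1) q
      simp [M, LinearMap.mulLeft_apply, mul_comm]
    have hg : ((a : En n) 1 : Pn n) = 0 := by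
      apply poly_ker f ((a : En n) 1).totalDegree _ le_rfl
      have : (⟨M ((a : En n) 1), hM _⟩ : WeylAlgebra n) = a := by
        apply Subtype.ext
        exact haM.symm
      rw [this]
      exact hf
    apply Subtype.ext
    rw [haM, hg]
    show M 0 = 0
    apply LinearMap.ext
    intro q
    simp [M, LinearMap.mulLeft_apply]
  | succ k ihk =>
    intro a h hf
    have hb : ∀ i, a * ⟨M (X i), mem_X i⟩ - ⟨M (X i), mem_X i⟩ * a = 0 := by
      intro i
      apply ihk
      · exact h i
      · rw [map_sub f, map_mul f, map_mul f, hf, mul_zero, zero_mul, sub_zero]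
    have h0 : Ord 0 (a : En n) := by
      rw [ord0_iff]
      intro i
      have := congrArg (Subtype.val) (hb i)
      exact this
    exact ihk a (ord_le (Nat.zero_le k) h0) hf

end Hom

end WeylProof

/-- Since `Aₙ(ℂ)` is simple, every `ℂ`-algebra homomorphism from the Weyl algebra
`Aₙ(ℂ)` into a nontrivial ring is injective (Example 5.1.4). -/
theorem stmt_2 (n : ℕ) (hn : 0 < n) (S : Type*) [Ring S] [Nontrivial S] [Algebra ℂ S]
    (f : WeylAlgebra n →ₐ[ℂ] S) :
    Function.Injective f := by
  rw [injective_iff_map_eq_zero]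
  intro a hfa
  obtain ⟨k, hk⟩ := WeylProof.exists_ord (a : WeylProof.En n) a.2
  exact WeylProof.ord_ker f k a hk hfa
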